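/- Let p be a joint distribution on S × A × D factored as p(s,a,d) = p(s) p(a|s) p(d|s,a), and for λ: S → [0,1] define q(s,a,d) = p(s) · [λ(s) p(a) + (1−λ(s)) p(a|s)] · p(d|s,a). Then D_KL(p ‖ q) ≤ (Σ_s p(s) λ(s) Σ_a p(a|s) log(p(a|s)/p(a))), and in particular D_KL(p ‖ q) ≤ I_p(s, a). -/

import Mathlib

open Finset

/-- KL divergence between pmfs on `S × A × D` (natural log). -/
noncomputable def KL3 {S A D : Type*} [Fintype S] [Fintype A] [Fintype D]
    (p q : S → A → D → ℝ) : ℝ :=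
  ∑ s, ∑ a, ∑ d, p s a d * Real.log (p s a d / q s a d)

/-- With the mixing parametrization
`q(s,a,d) = p(s) [λ(s) p(a) + (1−λ(s)) p(a|s)] p(d|s,a)`, the utility loss is
bounded: `D_KL(p‖q) ≤ Σ_s p(s) λ(s) Σ_a p(a|s) log(p(a|s)/p(a))`, and in
particular `D_KL(p‖q) ≤ I_p(s,a)`. -/
theorem stmt7 {S A D : Type*} [Fintype S] [Fintype A] [Fintype D]
    [Nonempty S] [Nonempty A] [Nonempty D]
    (p : S → A → D → ℝ)
    (hp : ∀ s a d, 0 < p s a d)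
    (hsum : ∑ s, ∑ a, ∑ d, p s a d = 1)
    (pS : S → ℝ) (hpS : ∀ s, pS s = ∑ a, ∑ d, p s a d)
    (pA : A → ℝ) (hpA : ∀ a, pA a = ∑ s, ∑ d, p s a d)
    (pAcond : S → A → ℝ)
    (hpAcond : ∀ s a, pAcond s a = (∑ d, p s a d) / pS s)
    (pDcond : S → A → D → ℝ)
    (hpD : ∀ s a d, pDcond s a d = p s a d / (∑ d', p s a d'))
    (lam : S → ℝ) (hlam0 : ∀ s, 0 ≤ lam s) (hlam1 : ∀ s, lam s ≤ 1)
    (q : S → A → D → ℝ)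
    (hq : ∀ s a d, q s a d =
      pS s * (lam s * pA a + (1 - lam s) * pAcond s a) * pDcond s a d)
    (Ip : ℝ)
    (hIp : Ip = ∑ s, ∑ a, pS s * pAcond s a * Real.log (pAcond s a / pA a)) :
    KL3 p q ≤ ∑ s, pS s * lam s * ∑ a, pAcond s a * Real.log (pAcond s a / pA a) ∧
    KL3 p q ≤ Ip := by
  have hSD : ∀ s a, 0 < ∑ d, p s a d := fun s a =>
    Finset.sum_pos (fun d _ => hp s a d) Finset.univ_nonempty
  have hpSpos : ∀ s, 0 < pS s := fun s => by
    rw [hpS]; exact Finset.sum_pos (fun a _ => hSD s a) Finset.univ_nonempty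
  have hpApos : ∀ a, 0 < pA a := fun a => by
    rw [hpA]; exact Finset.sum_pos (fun s _ => hSD s a) Finset.univ_nonempty
  have hpCpos : ∀ s a, 0 < pAcond s a := fun s a => by
    rw [hpAcond]; exact div_pos (hSD s a) (hpSpos s)
  have hsumC : ∀ s, ∑ a, pAcond s a = 1 := by
    intro s
    have : ∑ a, pAcond s a = (∑ a, ∑ d, p s a d) / pS s := by
      rw [Finset.sum_div]; exact Finset.sum_congr rfl fun a _ => hpAcond s a
    rw [this, ← hpS s, div_self (hpSpos s).ne']
  have hsumpA : ∑ a, pA a = 1 := by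
    have : ∑ a, pA a = ∑ a, ∑ s, ∑ d, p s a d :=
      Finset.sum_congr rfl fun a _ => hpA a
    rw [this, Finset.sum_comm, hsum]
  have hfac : ∀ s a d, p s a d = pS s * pAcond s a * pDcond s a d := by
    intro s a d
    rw [hpAcond, hpD]
    have hX : pS s * ∑ d, p s a d ≠ 0 := (mul_pos (hpSpos s) (hSD s a)).ne'
    field_simp
    rw [eq_div_iff hX]; ring
  -- mix positivity
  have hmixpos : ∀ s a, 0 < lam s * pA a + (1 - lam s) * pAcond s a := by
    intro s a
    rcases eq_or_lt_of_le (hlam0 s) with h | h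
    · rw [← h]; simpa using hpCpos s a
    · have h1 : 0 < lam s * pA a := mul_pos h (hpApos a)
      have h2 : 0 ≤ (1 - lam s) * pAcond s a :=
        mul_nonneg (by linarith [hlam1 s]) (hpCpos s a).le
      linarith
  -- KL3 rewriting
  have hKL : KL3 p q = ∑ s, ∑ a, (pS s * pAcond s a) *
      Real.log (pAcond s a / (lam s * pA a + (1 - lam s) * pAcond s a)) := by
    unfold KL3
    refine Finset.sum_congr rfl fun s _ => Finset.sum_congr rfl fun a _ => ?_
    have : ∀ d, p s a d * Real.log (p s a d / q s a d)
        = p s a d * Real.log (pAcond s a / (lam s * pA a + (1 - lam s) * pAcond s a)) := by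
      intro d
      congr 1
      rw [hq s a d]
      rw [hfac s a d]
      have hD : 0 < pDcond s a d := by
        rw [hpD]; exact div_pos (hp s a d) (hSD s a)
      have h1 : pS s ≠ 0 := (hpSpos s).ne'
      have h2 : pDcond s a d ≠ 0 := hD.ne'
      have h3 : lam s * pA a + (1 - lam s) * pAcond s a ≠ 0 := (hmixpos s a).ne'
      rw [show pS s * pAcond s a * pDcond s a d / (pS s * (lam s * pA a + (1 - lam s) * pAcond s a) * pDcond s a d)
          = pAcond s a / (lam s * pA a + (1 - lam s) * pAcond s a) by
        field_simp]
    rw [Finset.sum_congr rfl fun d _ => this d, ← Finset.sum_mul]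
    congr 1
    rw [hpAcond, ← mul_div_assoc, mul_comm, mul_div_assoc, div_self (hpSpos s).ne', mul_one]
  -- pointwise log bound
  have hlog : ∀ s a, Real.log (pAcond s a / (lam s * pA a + (1 - lam s) * pAcond s a))
      ≤ lam s * Real.log (pAcond s a / pA a) := by
    intro s a
    have hconc := strictConcaveOn_log_Ioi.concaveOn.2
      (Set.mem_Ioi.2 (hpApos a)) (Set.mem_Ioi.2 (hpCpos s a))
      (hlam0 s) (sub_nonneg.2 (hlam1 s)) (by ring)
    simp only [smul_eq_mul] at hconc
    rw [Real.log_div (hpCpos s a).ne' (hmixpos s a).ne',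
        Real.log_div (hpCpos s a).ne' (hpApos a).ne']
    have : lam s * Real.log (pA a) + (1 - lam s) * Real.log (pAcond s a)
        ≤ Real.log ((lam s * pA a + (1 - lam s) * pAcond s a)) := hconc
    nlinarith
  -- first inequality
  have h1 : KL3 p q ≤ ∑ s, pS s * lam s *
      ∑ a, pAcond s a * Real.log (pAcond s a / pA a) := by
    rw [hKL]
    have : ∀ s, pS s * lam s * ∑ a, pAcond s a * Real.log (pAcond s a / pA a)
        = ∑ a, (pS s * pAcond s a) * (lam s * Real.log (pAcond s a / pA a)) := by
      intro s; rw [Finset.mul_sum]; exact Finset.sum_congr rfl fun a _ => by ring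
    rw [Finset.sum_congr rfl fun s _ => this s]
    refine Finset.sum_le_sum fun s _ => Finset.sum_le_sum fun a _ => ?_
    exact mul_le_mul_of_nonneg_left (hlog s a)
      (mul_nonneg (hpSpos s).le (hpCpos s a).le)
  refine ⟨h1, le_trans h1 ?_⟩
  -- Gibbs nonnegativity of inner sum
  have hGibbs : ∀ s, 0 ≤ ∑ a, pAcond s a * Real.log (pAcond s a / pA a) := by
    intro s
    have key : ∑ a, pAcond s a * Real.log (pA a / pAcond s a) ≤ 0 := by
      have : ∀ a, pAcond s a * Real.log (pA a / pAcond s a)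
          ≤ pA a - pAcond s a := by
        intro a
        have hx : 0 < pA a / pAcond s a := div_pos (hpApos a) (hpCpos s a)
        have := Real.log_le_sub_one_of_pos hx
        have h2 := mul_le_mul_of_nonneg_left this (hpCpos s a).le
        calc pAcond s a * Real.log (pA a / pAcond s a)
            ≤ pAcond s a * (pA a / pAcond s a - 1) := h2
          _ = pA a - pAcond s a := by
              rw [mul_sub, mul_one, ← mul_div_assoc, mul_comm, mul_div_assoc,
                div_self (hpCpos s a).ne', mul_one]
      calc ∑ a, pAcond s a * Real.log (pA a / pAcond s a)
          ≤ ∑ a, (pA a - pAcond s a) := Finset.sum_le_sum fun a _ => this a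
        _ = 0 := by rw [Finset.sum_sub_distrib, hsumpA, hsumC s]; ring
    have : ∑ a, pAcond s a * Real.log (pAcond s a / pA a)
        = - ∑ a, pAcond s a * Real.log (pA a / pAcond s a) := by
      rw [← Finset.sum_neg_distrib]
      refine Finset.sum_congr rfl fun a _ => ?_
      rw [Real.log_div (hpCpos s a).ne' (hpApos a).ne',
          Real.log_div (hpApos a).ne' (hpCpos s a).ne']
      ring
    rw [this]; linarith
  rw [hIp]
  have : ∀ s, ∑ a, pS s * pAcond s a * Real.log (pAcond s a / pA a)
      = pS s * ∑ a, pAcond s a * Real.log (pAcond s a / pA a) := by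
    intro s; rw [Finset.mul_sum]; exact Finset.sum_congr rfl fun a _ => by ring
  rw [Finset.sum_congr rfl fun s _ => this s]
  refine Finset.sum_le_sum fun s _ => ?_
  rw [mul_assoc]
  exact mul_le_mul_of_nonneg_left
    (by nlinarith [hlam1 s, hGibbs s]) (hpSpos s).le
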